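/- Let S ⊆ ℝ^d be nonempty closed, c ∉ S with two distinct nearest points x_l ≠ x_r (with respect to a strictly convex norm, e.g., the Euclidean norm), and suppose the distance function φ_S is differentiable at all points of the open segments z_l^δ = c − δ(c − x_l) and z_r^δ = c − δ(c − x_r) for small δ > 0 with ∇φ_S(z^δ) = (z^δ − x)/‖z^δ − x‖ where x is the unique nearest point. Then lim_{δ→0} ∇φ_S(z_l^δ) = (c − x_l)/‖c − x_l‖ ≠ (c − x_r)/‖c − x_r‖ = lim_{δ→0} ∇φ_S(z_r^δ); hence φ_S is not differentiable at c. -/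

import Mathlib

open Metric Filter Topology

/-- Non-differentiability of the distance function at a point of the medial axis: if `c` has
two distinct nearest points `x_l ≠ x_r` in `S` and the gradient of `φ_S` along the segments
`z^δ = c − δ(c − x)` is `(z^δ − x)/‖z^δ − x‖`, then the two gradient limits as `δ → 0⁺` are
`(c − x_l)/‖c − x_l‖ ≠ (c − x_r)/‖c − x_r‖`, and `φ_S` is not differentiable at `c`. -/
theorem distance_function_not_differentiable_on_medial_axis
    {d : ℕ} (S : Set (EuclideanSpace ℝ (Fin d))) (hS : S.Nonempty) (hSclosed : IsClosed S)
    (c xl xr : EuclideanSpace ℝ (Fin d)) (hc : c ∉ S)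
    (hxl : xl ∈ S) (hxr : xr ∈ S) (hne : xl ≠ xr)
    (hl : dist c xl = infDist c S) (hr : dist c xr = infDist c S)
    (φ : EuclideanSpace ℝ (Fin d) → ℝ) (hφ : φ = fun x => infDist x S)
    (hdiffl : ∀ δ ∈ Set.Ioo (0 : ℝ) 1,
      DifferentiableAt ℝ φ (c - δ • (c - xl)) ∧
        gradient φ (c - δ • (c - xl)) =
          ‖c - δ • (c - xl) - xl‖⁻¹ • (c - δ • (c - xl) - xl))
    (hdiffr : ∀ δ ∈ Set.Ioo (0 : ℝ) 1,
      DifferentiableAt ℝ φ (c - δ • (c - xr)) ∧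
        gradient φ (c - δ • (c - xr)) =
          ‖c - δ • (c - xr) - xr‖⁻¹ • (c - δ • (c - xr) - xr)) :
    Tendsto (fun δ : ℝ => gradient φ (c - δ • (c - xl))) (𝓝[>] 0)
        (𝓝 (‖c - xl‖⁻¹ • (c - xl))) ∧
      Tendsto (fun δ : ℝ => gradient φ (c - δ • (c - xr))) (𝓝[>] 0)
        (𝓝 (‖c - xr‖⁻¹ • (c - xr))) ∧
      ‖c - xl‖⁻¹ • (c - xl) ≠ ‖c - xr‖⁻¹ • (c - xr) ∧
      ¬ DifferentiableAt ℝ φ c := by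
  set R := infDist c S with hRdef
  have hRpos : 0 < R := (hSclosed.notMem_iff_infDist_pos hS).1 hc
  -- the gradient along the segments is constant
  have key : ∀ (x : EuclideanSpace ℝ (Fin d)), dist c x = R →
      (∀ δ ∈ Set.Ioo (0 : ℝ) 1,
        gradient φ (c - δ • (c - x)) =
          ‖c - δ • (c - x) - x‖⁻¹ • (c - δ • (c - x) - x)) →
      ∀ᶠ δ in 𝓝[>] (0 : ℝ),
        gradient φ (c - δ • (c - x)) = ‖c - x‖⁻¹ • (c - x) := by
    intro x hx hgrad
    have hnorm : ‖c - x‖ = R := by rw [← hx, dist_eq_norm]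
    filter_upwards [Ioo_mem_nhdsGT_of_mem
      (Set.mem_Ico.2 ⟨le_refl (0:ℝ), zero_lt_one⟩)] with δ hδ
    have hz : c - δ • (c - x) - x = (1 - δ) • (c - x) := by
      rw [sub_smul, one_smul]; abel
    have h1δ : (0:ℝ) < 1 - δ := by linarith [hδ.2]
    rw [hgrad δ hδ, hz, norm_smul, Real.norm_eq_abs, abs_of_pos h1δ, smul_smul]
    congr 1
    field_simp
  have hTl := key xl hl (fun δ hδ => (hdiffl δ hδ).2)
  have hTr := key xr hr (fun δ hδ => (hdiffr δ hδ).2)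
  have hnl : ‖c - xl‖ = R := by rw [← hl, dist_eq_norm]
  have hnr : ‖c - xr‖ = R := by rw [← hr, dist_eq_norm]
  refine ⟨tendsto_const_nhds.congr' (hTl.mono fun δ h => h.symm),
    tendsto_const_nhds.congr' (hTr.mono fun δ h => h.symm), ?_, ?_⟩
  · -- the two limits differ
    intro h
    apply hne
    have h2 : c - xl = c - xr := by
      have := congrArg (fun v => (R : ℝ) • v) h
      simpa [hnl, hnr, smul_smul, mul_inv_cancel₀ hRpos.ne'] using this
    have := sub_right_injective h2
    exact this
  · -- non-differentiability at c
    intro hdiff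
    set L := fderiv ℝ φ c with hL
    have hlip : LipschitzWith 1 φ := by
      rw [hφ]; exact lipschitz_infDist_pt S
    have hLnorm : ‖L‖ ≤ 1 := by
      simpa using norm_fderiv_le_of_lipschitz ℝ hlip
    -- directional derivative along segment towards a nearest point
    have dirDeriv : ∀ (x : EuclideanSpace ℝ (Fin d)), x ∈ S → dist c x = R →
        L (x - c) = -R := by
      intro x hxS hx
      have hnx : ‖c - x‖ = R := by rw [← hx, dist_eq_norm]
      -- value of φ along the segment
      have hval : ∀ t ∈ Set.Ico (0:ℝ) 1, φ (c + t • (x - c)) = (1 - t) * R := by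
        intro t ht
        have h1t : (0:ℝ) < 1 - t := by linarith [ht.2]
        have hdistx : dist (c + t • (x - c)) x = (1 - t) * R := by
          rw [dist_eq_norm]
          have : c + t • (x - c) - x = (1 - t) • (c - x) := by
            rw [sub_smul, one_smul, smul_sub, smul_sub]; abel
          rw [this, norm_smul, Real.norm_eq_abs, abs_of_pos h1t, hnx]
        have hdistc : dist c (c + t • (x - c)) = t * R := by
          rw [dist_eq_norm]
          have : c - (c + t • (x - c)) = t • (c - x) := by
            rw [smul_sub, smul_sub]; abel
          rw [this, norm_smul, Real.norm_eq_abs, abs_of_nonneg ht.1, hnx]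
        have hle : φ (c + t • (x - c)) ≤ (1 - t) * R := by
          rw [hφ]; exact hdistx ▸ infDist_le_dist_of_mem hxS
        have hge : (1 - t) * R ≤ φ (c + t • (x - c)) := by
          have htri : infDist c S ≤ infDist (c + t • (x - c)) S + dist c (c + t • (x - c)) :=
            infDist_le_infDist_add_dist
          rw [hφ]; rw [hdistc] at htri
          nlinarith [htri]
        linarith
      -- derivative of the composition
      have hg : HasDerivAt (fun t : ℝ => c + t • (x - c)) (x - c) 0 := by
        simpa using ((hasDerivAt_id (0:ℝ)).smul_const (x - c)).const_add c
      have h1 : HasDerivAt (fun t : ℝ => φ (c + t • (x - c))) (L (x - c)) 0 := by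
        have h0 : c + (0:ℝ) • (x - c) = c := by simp
        have hd : HasFDerivAt φ L (c + (0:ℝ) • (x - c)) := by
          rw [h0]; exact hdiff.hasFDerivAt
        exact hd.comp_hasDerivAt 0 hg
      have h1' : HasDerivWithinAt (fun t : ℝ => φ (c + t • (x - c))) (L (x - c))
          (Set.Ici 0) 0 := h1.hasDerivWithinAt
      have h2 : HasDerivWithinAt (fun t : ℝ => (1 - t) * R) (-R) (Set.Ici 0) 0 := by
        have : HasDerivAt (fun t : ℝ => (1 - t) * R) (-R) 0 := by
          simpa using (((hasDerivAt_id (0:ℝ)).const_sub 1).mul_const R)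
        exact this.hasDerivWithinAt
      have hEq : (fun t : ℝ => φ (c + t • (x - c))) =ᶠ[𝓝[Set.Ici 0] (0:ℝ)]
          (fun t : ℝ => (1 - t) * R) := by
        have hmem : Set.Ico (0:ℝ) 1 ∈ 𝓝[Set.Ici 0] (0:ℝ) := by
          rw [show Set.Ico (0:ℝ) 1 = Set.Ici 0 ∩ Set.Iio 1 from rfl]
          exact inter_mem_nhdsWithin _ (Iio_mem_nhds zero_lt_one)
        filter_upwards [hmem] with t ht using hval t ht
      have h3 : HasDerivWithinAt (fun t : ℝ => φ (c + t • (x - c))) (-R)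
          (Set.Ici 0) 0 := by
        refine h2.congr_of_eventuallyEq hEq ?_
        simpa using hval 0 ⟨le_refl 0, zero_lt_one⟩
      have hu : UniqueDiffWithinAt ℝ (Set.Ici (0:ℝ)) 0 := uniqueDiffOn_Ici 0 0 Set.self_mem_Ici
      have := h1'.derivWithin hu ▸ h3.derivWithin hu
      linarith [this.symm ▸ (rfl : L (x - c) = L (x - c)), this]
    have hLl : L (c - xl) = R := by
      have := dirDeriv xl hxl hl
      have h2 : L (c - xl) = - L (xl - c) := by
        rw [← map_neg]; congr 1; abel
      rw [h2, this, neg_neg]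
    have hLr : L (c - xr) = R := by
      have := dirDeriv xr hxr hr
      have h2 : L (c - xr) = - L (xr - c) := by
        rw [← map_neg]; congr 1; abel
      rw [h2, this, neg_neg]
    have hsum : L ((c - xl) + (c - xr)) = 2 * R := by
      rw [map_add, hLl, hLr]; ring
    have hbound : 2 * R ≤ ‖(c - xl) + (c - xr)‖ := by
      calc 2 * R = L ((c - xl) + (c - xr)) := hsum.symm
        _ ≤ ‖L ((c - xl) + (c - xr))‖ := le_abs_self _
        _ ≤ ‖L‖ * ‖(c - xl) + (c - xr)‖ := L.le_opNorm _
        _ ≤ 1 * ‖(c - xl) + (c - xr)‖ := by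
            apply mul_le_mul_of_nonneg_right hLnorm (norm_nonneg _)
        _ = ‖(c - xl) + (c - xr)‖ := one_mul _
    have hub : ‖(c - xl) + (c - xr)‖ ≤ 2 * R := by
      calc ‖(c - xl) + (c - xr)‖ ≤ ‖c - xl‖ + ‖c - xr‖ := norm_add_le _ _
        _ = 2 * R := by rw [hnl, hnr]; ring
    have heq : ‖(c - xl) + (c - xr)‖ = ‖c - xl‖ + ‖c - xr‖ := by
      rw [hnl, hnr]; linarith
    have := eq_of_norm_eq_of_norm_add_eq (by rw [hnl, hnr]) heq
    exact hne (sub_right_injective this)
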